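/- Let (X,Σ,μ) be a Lebesgue probability space with an ergodic aperiodic measure preserving transformation θ, Tf = f∘θ, and let δ_n → 0 with δ_n ≤ γ_n for some sequence γ_n → 0 such that nγ_n increases to ∞. Then there exists f = (I-T)h with h ∈ L¹(μ) such that limsup_n δ_n^{-1}|M_n f| = ∞ μ-a.e. -/

import Mathlib

open MeasureTheory Filter Topology ENNReal


open Set in
theorem aux_noatom {X : Type*} [MeasurableSpace X] [MeasurableSingletonClass X]
    (μ : Measure X) [IsProbabilityMeasure μ]
    (θ : X → X) (hθ : MeasurePreserving θ μ μ)
    (haper : μ {x | ∃ n : ℕ, 0 < n ∧ θ^[n] x = x} = 0) (x₀ : X) : μ {x₀} = 0 := by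
  by_contra hc
  -- masses along the orbit don't decrease
  have hstep : ∀ y : X, μ {y} ≤ μ {θ y} := by
    intro y
    have : μ (θ ⁻¹' {θ y}) = μ {θ y} := hθ.measure_preimage (measurableSet_singleton _).nullMeasurableSet
    calc μ {y} ≤ μ (θ ⁻¹' {θ y}) := measure_mono (by simp)
    _ = μ {θ y} := this
  have horb : ∀ n : ℕ, μ {x₀} ≤ μ {θ^[n] x₀} := by
    intro n
    induction n with
    | zero => simp
    | succ n ih => exact ih.trans (by rw [Function.iterate_succ_apply']; exact hstep _)
  by_cases hinj : Function.Injective (fun n : ℕ => θ^[n] x₀)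
  · -- infinitely many disjoint singletons of mass ≥ μ{x₀} : contradiction
    have hsum : ∀ K : ℕ, (K : ℝ≥0∞) * μ {x₀} ≤ 1 := by
      intro K
      have hd : (Finset.range K : Set ℕ).PairwiseDisjoint (fun n => ({θ^[n] x₀} : Set X)) := by
        intro i _ j _ hij
        simp only [Function.onFun, Set.disjoint_singleton_left, Set.mem_singleton_iff]
        exact fun h => hij (hinj h)
      have := measure_biUnion_finset hd (fun n _ => measurableSet_singleton _) (μ := μ)
      calc (K : ℝ≥0∞) * μ {x₀} = ∑ n ∈ Finset.range K, μ {x₀} := by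
            simp [Finset.sum_const, mul_comm]
      _ ≤ ∑ n ∈ Finset.range K, μ {θ^[n] x₀} := Finset.sum_le_sum fun n _ => horb n
      _ = μ (⋃ n ∈ Finset.range K, {θ^[n] x₀}) := this.symm
      _ ≤ 1 := prob_le_one
    have hne : μ {x₀} ≠ ⊤ := (lt_of_le_of_lt prob_le_one one_lt_top).ne
    obtain ⟨K, hK⟩ := ENNReal.exists_nat_gt (ENNReal.inv_ne_top.mpr hc)
    have h1 : (1 : ℝ≥0∞) < (K : ℝ≥0∞) * μ {x₀} := by
      have := ENNReal.mul_lt_mul_right hc hne hK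
      rwa [ENNReal.mul_inv_cancel hc hne, mul_comm] at this
    exact absurd (hsum K) (not_le.mpr h1)
  · -- a periodic point of positive mass: contradiction with haper
    simp only [Function.Injective] at hinj
    push_neg at hinj
    obtain ⟨i, j, hij, hne⟩ := hinj
    wlog hlt : i < j generalizing i j
    · exact this j i hij.symm hne.symm (by omega)
    have hper : θ^[j - i] (θ^[i] x₀) = θ^[i] x₀ := by
      rw [← Function.iterate_add_apply]
      rw [Nat.sub_add_cancel hlt.le]
      exact hij.symm
    have hmem : θ^[i] x₀ ∈ {x | ∃ n : ℕ, 0 < n ∧ θ^[n] x = x} := ⟨j - i, by omega, hper⟩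
    have : μ {θ^[i] x₀} ≤ 0 := haper ▸ measure_mono (Set.singleton_subset_iff.mpr hmem)
    exact hc (le_antisymm (le_trans (horb i) this) zero_le) |>.elim

open Set in
theorem aux_small {X : Type*} [MeasurableSpace X] [StandardBorelSpace X]
    (μ : Measure X) [IsProbabilityMeasure μ]
    (hatom : ∀ x : X, μ {x} = 0) {ε : ℝ} (hε : 0 < ε) :
    ∃ B : Set X, MeasurableSet B ∧ 0 < μ B ∧ μ B ≤ ENNReal.ofReal ε := by
  rcases le_or_gt 1 ε with h1 | h1
  · refine ⟨Set.univ, MeasurableSet.univ, by simp, ?_⟩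
    simp only [measure_univ]
    calc (1 : ℝ≥0∞) = ENNReal.ofReal 1 := by simp
    _ ≤ ENNReal.ofReal ε := ENNReal.ofReal_le_ofReal h1
  obtain ⟨f, hf⟩ := exists_measurableEmbedding_real X
  set ν : Measure ℝ := μ.map f with hν
  have hprob : IsProbabilityMeasure ν := Measure.isProbabilityMeasure_map hf.measurable.aemeasurable
  have hνatom : ∀ t : ℝ, ν {t} = 0 := by
    intro t
    rw [hν, hf.map_apply]
    have hsub : (f ⁻¹' {t}).Subsingleton := fun a ha b hb => hf.injective (by
      simp only [Set.mem_preimage, Set.mem_singleton_iff] at ha hb; rw [ha, hb])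
    rcases hsub.eq_empty_or_singleton with h | ⟨x, h⟩
    · simp [h]
    · rw [h]; exact hatom x
  set F := ProbabilityTheory.cdf ν with hF
  have hmono : Monotone F := ProbabilityTheory.monotone_cdf ν
  have hcont : Continuous F := by
    rw [continuous_iff_continuousAt]
    intro x
    rw [hmono.continuousAt_iff_leftLim_eq_rightLim]
    have hr : Function.rightLim F x = F x :=
      hmono.continuousWithinAt_Ioi_iff_rightLim_eq.1
        ((F.right_continuous x).mono Set.Ioi_subset_Ici_self)
    have hl : Function.leftLim F x = F x := by
      have hms : F.measure {x} = ENNReal.ofReal (F x - Function.leftLim F x) :=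
        F.measure_singleton x
      rw [ProbabilityTheory.measure_cdf, hνatom x] at hms
      have h0 : F x - Function.leftLim F x ≤ 0 := by
        by_contra hcon
        push_neg at hcon
        rw [eq_comm, ENNReal.ofReal_eq_zero] at hms
        linarith
      have h1 : Function.leftLim F x ≤ F x := hmono.leftLim_le le_rfl
      linarith
    rw [hl, hr]
  -- find t with F t = ε
  obtain ⟨a, ha⟩ : ∃ a, F a < ε := by
    have := ProbabilityTheory.tendsto_cdf_atBot (μ := ν)
    rcases (this.eventually (eventually_lt_nhds hε)).exists with ⟨a, ha⟩
    exact ⟨a, ha⟩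
  obtain ⟨b, hb⟩ : ∃ b, ε < F b := by
    have := ProbabilityTheory.tendsto_cdf_atTop (μ := ν)
    rcases (this.eventually (eventually_gt_nhds h1)).exists with ⟨b, hb⟩
    exact ⟨b, hb⟩
  have hab : a ≤ b := by
    by_contra hcon
    push_neg at hcon
    exact absurd (hmono hcon.le) (not_le.mpr (ha.trans hb))
  obtain ⟨t, _, ht⟩ := intermediate_value_Icc hab hcont.continuousOn
    (Set.mem_Icc.mpr ⟨ha.le, hb.le⟩)
  refine ⟨f ⁻¹' (Set.Iic t), hf.measurable measurableSet_Iic, ?_, ?_⟩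
  · have : μ (f ⁻¹' Set.Iic t) = ν (Set.Iic t) := (hf.map_apply μ _).symm
    rw [this, ← ProbabilityTheory.ofReal_cdf, ht]
    simpa using hε
  · have : μ (f ⁻¹' Set.Iic t) = ν (Set.Iic t) := (hf.map_apply μ _).symm
    rw [this, ← ProbabilityTheory.ofReal_cdf, ht]

open Set in
theorem aux_sweep {X : Type*} [MeasurableSpace X] [StandardBorelSpace X]
    (μ : Measure X) [IsProbabilityMeasure μ]
    (θ : X → X) (hθ : MeasurePreserving θ μ μ) (herg : Ergodic θ μ)
    (hatom : ∀ x : X, μ {x} = 0) {N : ℕ} (hN : 1 ≤ N) :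
    ∃ A : Set X, MeasurableSet A ∧ μ A ≤ ENNReal.ofReal (2 / N) ∧
      ∀ᵐ x ∂μ, ∃ j, 1 ≤ j ∧ j ≤ N ∧ θ^[j] x ∈ A := by
  classical
  have hNpos : (0:ℝ) < 1 / N := by positivity
  obtain ⟨B, hBm, hBpos, hBle⟩ := aux_small μ hatom hNpos
  -- first hitting time level sets
  set C : ℕ → Set X := fun t =>
    θ^[t] ⁻¹' B ∩ ⋂ (s : ℕ) (_ : s ∈ Set.Ico 1 t), (θ^[s] ⁻¹' B)ᶜ with hC
  have hmemC : ∀ t x, x ∈ C t ↔ (θ^[t] x ∈ B ∧ ∀ s, 1 ≤ s → s < t → θ^[s] x ∉ B) := by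
    intro t x
    simp [hC, Set.mem_iInter, Set.mem_Ico, and_imp]
  have hCm : ∀ t, MeasurableSet (C t) := by
    intro t
    refine ((hθ.iterate t).measurable hBm).inter ?_
    exact MeasurableSet.iInter fun s => MeasurableSet.iInter fun _ =>
      ((hθ.iterate s).measurable hBm).compl
  set D : Set X := ⋃ (k : ℕ) (_ : 1 ≤ k), C (k * N) with hD
  have hDm : MeasurableSet D :=
    MeasurableSet.iUnion fun k => MeasurableSet.iUnion fun _ => hCm _
  have hmemD : ∀ x, x ∈ D ↔ ∃ k, 1 ≤ k ∧ x ∈ C (k * N) := by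
    intro x; simp [hD]
  -- disjointness of the first N preimages of D
  have hdisj : ∀ i j : ℕ, i < j → j < N → Disjoint (θ^[i] ⁻¹' D) (θ^[j] ⁻¹' D) := by
    intro i j hij hjN
    rw [Set.disjoint_left]
    rintro x hxi hxj
    rw [Set.mem_preimage, hmemD] at hxi hxj
    obtain ⟨a, ha1, hxa⟩ := hxi
    obtain ⟨b, hb1, hxb⟩ := hxj
    rw [hmemC] at hxa hxb
    obtain ⟨ha, ha'⟩ := hxa
    obtain ⟨hb, hb'⟩ := hxb
    rw [← Function.iterate_add_apply] at ha hb
    set d := j - i with hd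
    have hd1 : 1 ≤ d := by omega
    have hdN : d < N := by omega
    have haN : N ≤ a * N := Nat.le_mul_of_pos_left N (by omega)
    have hbN : N ≤ b * N := Nat.le_mul_of_pos_left N (by omega)
    -- from minimality of a*N for θ^[i] x : a*N ≤ d + b*N
    have h1 : a * N ≤ d + b * N := by
      by_contra hcon
      push_neg at hcon
      have := ha' (d + b * N) (by omega) hcon
      rw [← Function.iterate_add_apply] at this
      exact this (by
        have : d + b * N + i = b * N + j := by omega
        rw [this]; exact hb)
    -- from minimality of b*N for θ^[j] x : b*N + d ≤ a*N
    have h2 : b * N + d ≤ a * N := by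
      by_contra hcon
      push_neg at hcon
      have hs1 : 1 ≤ a * N - d := by omega
      have hs2 : a * N - d < b * N := by omega
      have := hb' (a * N - d) hs1 hs2
      rw [← Function.iterate_add_apply] at this
      exact this (by
        have : a * N - d + j = a * N + i := by omega
        rw [this]; exact ha)
    -- so a*N = b*N + d with 1 ≤ d < N : impossible
    have heq : a * N = b * N + d := le_antisymm (by linarith) h2
    have hba : b < a := by
      by_contra hcon
      push_neg at hcon
      have : a * N ≤ b * N := Nat.mul_le_mul_right N hcon
      linarith
    have hab2 : (b + 1) * N ≤ a * N := Nat.mul_le_mul_right N (by omega)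
    rw [add_mul, one_mul] at hab2
    linarith
  -- measure bound for D
  have hDprei : ∀ j : ℕ, μ (θ^[j] ⁻¹' D) = μ D := fun j =>
    (hθ.iterate j).measure_preimage hDm.nullMeasurableSet
  have hDsum : (N : ℝ≥0∞) * μ D ≤ 1 := by
    have hpd : (Finset.range N : Set ℕ).PairwiseDisjoint (fun j => θ^[j] ⁻¹' D) := by
      intro i hi j hj hij
      rcases Nat.lt_or_ge i j with h | h
      · exact hdisj i j h (by simpa using hj)
      · exact (hdisj j i (by omega) (by simpa using hi)).symm
    have := measure_biUnion_finset hpd (fun j _ => (hθ.iterate j).measurable hDm) (μ := μ)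
    calc (N : ℝ≥0∞) * μ D = ∑ j ∈ Finset.range N, μ (θ^[j] ⁻¹' D) := by
          simp [hDprei, Finset.sum_const, mul_comm]
    _ = μ (⋃ j ∈ Finset.range N, θ^[j] ⁻¹' D) := this.symm
    _ ≤ 1 := prob_le_one
  have hDle : μ D ≤ ENNReal.ofReal (1 / N) := by
    have h1 : μ D ≤ ((N : ℝ≥0∞))⁻¹ := by
      rw [ENNReal.le_inv_iff_mul_le, mul_comm]
      exact hDsum
    have h2 : ENNReal.ofReal (1 / (N:ℝ)) = ((N : ℝ≥0∞))⁻¹ := by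
      rw [one_div, ENNReal.ofReal_inv_of_pos (by exact_mod_cast (show 0 < N by omega)),
        ENNReal.ofReal_natCast]
    rw [h2]
    exact h1
  refine ⟨B ∪ D, hBm.union hDm, ?_, ?_⟩
  · calc μ (B ∪ D) ≤ μ B + μ D := measure_union_le _ _
    _ ≤ ENNReal.ofReal (1 / N) + ENNReal.ofReal (1 / N) := add_le_add hBle hDle
    _ = ENNReal.ofReal (2 / N) := by
        rw [← ENNReal.ofReal_add (by positivity) (by positivity)]
        ring_nf
  · -- coverage
    set U : Set X := ⋃ (n : ℕ) (_ : 1 ≤ n), θ^[n] ⁻¹' B with hU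
    have hUm : MeasurableSet U :=
      MeasurableSet.iUnion fun n => MeasurableSet.iUnion fun _ => (hθ.iterate n).measurable hBm
    have hUinv : θ ⁻¹' U ⊆ U := by
      rintro x hx
      simp only [hU, Set.mem_preimage, Set.mem_iUnion] at hx ⊢
      obtain ⟨n, hn1, hn⟩ := hx
      refine ⟨n + 1, by omega, ?_⟩
      rw [Function.iterate_succ_apply]
      exact hn
    have hUfull : μ Uᶜ = 0 := by
      rcases herg.ae_empty_or_univ_of_preimage_ae_le hUm.nullMeasurableSet
        (HasSubset.Subset.eventuallyLE hUinv) with h | h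
      · exfalso
        have hBU : θ ⁻¹' B ⊆ U := by
          intro x hx
          simp only [hU, Set.mem_iUnion]
          exact ⟨1, le_rfl, by simpa using hx⟩
        have : μ U = 0 := by
          have := h.le
          calc μ U = μ (∅ : Set X) := measure_congr h
          _ = 0 := measure_empty
        have : μ (θ ⁻¹' B) = 0 := measure_mono_null hBU this
        rw [hθ.measure_preimage hBm.nullMeasurableSet] at this
        exact absurd this hBpos.ne'
      · rwa [← ae_eq_univ]
    rw [ae_iff]
    refine measure_mono_null ?_ hUfull
    intro x hx
    simp only [Set.mem_setOf_eq] at hx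
    push_neg at hx
    -- show x ∉ U, i.e. if x ∈ U we find a good j
    simp only [Set.mem_compl_iff, hU, Set.mem_iUnion]
    rintro ⟨n, hn1, hnB⟩
    -- first hitting time
    have hex : ∃ m : ℕ, 1 ≤ m ∧ θ^[m] x ∈ B := ⟨n, hn1, hnB⟩
    set t := Nat.find hex with ht
    obtain ⟨ht1, htB⟩ := Nat.find_spec hex
    have htmin : ∀ s, 1 ≤ s → s < t → θ^[s] x ∉ B := fun s hs1 hst hsB =>
      Nat.find_min hex hst ⟨hs1, hsB⟩
    rcases le_or_gt t N with hle | hgt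
    · exact hx t ht1 hle (Set.mem_union_left _ htB)
    · -- t > N : land in D
      set q := (t - 1) / N with hq
      set r := (t - 1) % N with hr
      have hdm : N * q + r = t - 1 := Nat.div_add_mod (t - 1) N
      have hrN : r < N := Nat.mod_lt _ (by omega)
      have hq1 : 1 ≤ q := by
        rw [hq, Nat.one_le_div_iff (by omega)]
        omega
      have hQN : N ≤ N * q := Nat.le_mul_of_pos_right N (by omega)
      set j := t - N * q with hj
      have hj1 : 1 ≤ j := by omega
      have hjN : j ≤ N := by omega
      have hjt : q * N + j = t := by
        rw [Nat.mul_comm q N]; omega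
      refine hx j hj1 hjN (Set.mem_union_right _ ?_)
      rw [hmemD]
      refine ⟨q, hq1, ?_⟩
      rw [hmemC]
      constructor
      · rw [← Function.iterate_add_apply, hjt]
        exact htB
      · intro s hs1 hsq
        rw [← Function.iterate_add_apply]
        exact htmin (s + j) (by omega) (by omega)

/-- Under the hypotheses of the tower construction, for `δ_n → 0` with
`δ_n ≤ γ_n`, `γ_n → 0` and `n γ_n` increasing to `∞`, there is an `L¹`-coboundary
`f = (I-T)h` with `limsup_n δ_n⁻¹ |M_n f| = ∞` a.e. -/
theorem stmt19 {X : Type*} [MeasurableSpace X] [StandardBorelSpace X]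
    (μ : Measure X) [IsProbabilityMeasure μ]
    (θ : X → X) (hθ : MeasurePreserving θ μ μ) (herg : Ergodic θ μ)
    (haper : μ {x | ∃ n : ℕ, 0 < n ∧ θ^[n] x = x} = 0)
    (δ γ : ℕ → ℝ) (hδpos : ∀ n, 0 < δ n)
    (hδ0 : Tendsto δ atTop (𝓝 0)) (hγ0 : Tendsto γ atTop (𝓝 0))
    (hδγ : ∀ n, δ n ≤ γ n)
    (hγmono : Monotone (fun n : ℕ => (n : ℝ) * γ n))
    (hγtop : Tendsto (fun n : ℕ => (n : ℝ) * γ n) atTop atTop) :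
    ∃ h : X → ℝ, Measurable h ∧ Integrable h μ ∧
      ∀ᵐ x ∂μ, Filter.limsup
        (fun n : ℕ => ENNReal.ofReal
          (|(1 / (n : ℝ)) * ∑ k ∈ Finset.range n,
              (h (θ^[k] x) - h (θ^[k+1] x))| / δ n)) atTop = ⊤ := by
  classical
  have hatom : ∀ x : X, μ {x} = 0 := aux_noatom μ θ hθ haper
  have hγpos : ∀ n, 0 < γ n := fun n => lt_of_lt_of_le (hδpos n) (hδγ n)
  -- choose tower heights
  have hchoose : ∀ m : ℕ, ∃ Nm : ℕ, 1 ≤ Nm ∧ γ Nm ≤ (1/2)^m / (2*((m:ℝ)+1)) := by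
    intro m
    have hpos : 0 < (1/2:ℝ)^m / (2*((m:ℝ)+1)) := by positivity
    have h1 := hγ0.eventually (eventually_lt_nhds hpos)
    obtain ⟨n, hn1, hn2⟩ := (eventually_ge_atTop 1 |>.and h1).exists
    exact ⟨n, hn1, hn2.le⟩
  choose N hN1 hNγ using hchoose
  -- choose sweep sets
  have hsweep : ∀ m : ℕ, ∃ A : Set X, MeasurableSet A ∧ μ A ≤ ENNReal.ofReal (2 / N m) ∧
      ∀ᵐ x ∂μ, ∃ j, 1 ≤ j ∧ j ≤ N m ∧ θ^[j] x ∈ A :=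
    fun m => aux_sweep μ θ hθ herg hatom (hN1 m)
  choose A hAm hAle hAcov using hsweep
  set c : ℕ → ℝ := fun m => ((m:ℝ)+1) * ((N m : ℝ) * γ (N m)) with hc
  have hcpos : ∀ m, 0 < c m := by
    intro m
    have : (0:ℝ) < (N m : ℝ) := by exact_mod_cast hN1 m
    have := hγpos (N m)
    positivity
  set H : X → ℝ≥0∞ := fun x => ∑' m, (A m).indicator (fun _ => ENNReal.ofReal (c m)) x with hH
  have hHmeas : Measurable H :=
    Measurable.ennreal_tsum fun m => (measurable_const.indicator (hAm m))
  -- each term of the integral is small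
  have hterm : ∀ m : ℕ, ENNReal.ofReal (c m) * μ (A m) ≤ ENNReal.ofReal ((1/2)^m) := by
    intro m
    calc ENNReal.ofReal (c m) * μ (A m)
        ≤ ENNReal.ofReal (c m) * ENNReal.ofReal (2 / N m) :=
          mul_le_mul_right (hAle m) _
    _ = ENNReal.ofReal (c m * (2 / N m)) := (ENNReal.ofReal_mul (hcpos m).le).symm
    _ ≤ ENNReal.ofReal ((1/2)^m) := by
        apply ENNReal.ofReal_le_ofReal
        have hNne : (N m : ℝ) ≠ 0 := by
          have : (0:ℝ) < (N m : ℝ) := by exact_mod_cast hN1 m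
          exact this.ne'
        have heq : c m * (2 / N m) = 2*((m:ℝ)+1) * γ (N m) := by
          rw [hc]; field_simp
        rw [heq]
        have h2 : 2*((m:ℝ)+1) * γ (N m) ≤ 2*((m:ℝ)+1) * ((1/2)^m / (2*((m:ℝ)+1))) := by
          apply mul_le_mul_of_nonneg_left (hNγ m) (by positivity)
        refine h2.trans ?_
        rw [mul_div_cancel₀]
        positivity
  have hHint : ∫⁻ x, H x ∂μ ≤ ENNReal.ofReal 2 := by
    rw [hH]
    rw [lintegral_tsum fun m => (measurable_const.indicator (hAm m)).aemeasurable]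
    have h1 : ∀ m : ℕ, ∫⁻ x, (A m).indicator (fun _ => ENNReal.ofReal (c m)) x ∂μ
        = ENNReal.ofReal (c m) * μ (A m) := fun m => lintegral_indicator_const (hAm m) _
    calc ∑' m, ∫⁻ x, (A m).indicator (fun _ => ENNReal.ofReal (c m)) x ∂μ
        = ∑' m, ENNReal.ofReal (c m) * μ (A m) := by simp_rw [h1]
    _ ≤ ∑' m, ENNReal.ofReal ((1/2:ℝ)^m) := ENNReal.tsum_le_tsum hterm
    _ = ENNReal.ofReal (∑' m, (1/2:ℝ)^m) := by
        rw [ENNReal.ofReal_tsum_of_nonneg (fun m => by positivity)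
          (summable_geometric_of_lt_one (by norm_num) (by norm_num))]
    _ = ENNReal.ofReal 2 := by
        congr 1
        rw [tsum_geometric_of_lt_one (by norm_num) (by norm_num)]
        norm_num
  have hHfin : ∫⁻ x, H x ∂μ ≠ ⊤ := (lt_of_le_of_lt hHint ENNReal.ofReal_lt_top).ne
  set h : X → ℝ := fun x => (H x).toReal with hdefh
  have hmeas : Measurable h := hHmeas.ennreal_toReal
  have hint : Integrable h μ := integrable_toReal_of_lintegral_ne_top hHmeas.aemeasurable hHfin
  have hnonneg : ∀ x, 0 ≤ h x := fun x => ENNReal.toReal_nonneg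
  have hkey : ∀ m (x : X), H x ≠ ⊤ → x ∈ A m → c m ≤ h x := by
    intro m x hne hx
    have h1 : ENNReal.ofReal (c m) ≤ H x := by
      have := ENNReal.le_tsum (f := fun m => (A m).indicator (fun _ => ENNReal.ofReal (c m)) x) m
      rwa [Set.indicator_of_mem hx] at this
    have := ENNReal.toReal_mono hne h1
    rwa [ENNReal.toReal_ofReal (hcpos m).le] at this
  -- a.e. sets
  have hHtop : μ {x | H x = ⊤} = 0 := by
    have := ae_lt_top hHmeas hHfin
    rw [ae_iff] at this
    simpa [not_lt, top_le_iff] using this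
  have E2 : ∀ᵐ x ∂μ, ∀ n : ℕ, H (θ^[n] x) ≠ ⊤ := by
    rw [ae_all_iff]
    intro n
    rw [ae_iff]
    have : {x | ¬H (θ^[n] x) ≠ ⊤} = θ^[n] ⁻¹' {x | H x = ⊤} := by
      ext x; simp
    rw [this, (hθ.iterate n).measure_preimage]
    · exact hHtop
    · exact (hHmeas (measurableSet_singleton ⊤)).nullMeasurableSet
  have E3 : ∀ᵐ x ∂μ, ∀ m : ℕ, ∃ j, 1 ≤ j ∧ j ≤ N m ∧ θ^[j] x ∈ A m := ae_all_iff.mpr hAcov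
  refine ⟨h, hmeas, hint, ?_⟩
  filter_upwards [E2, E3] with x hx2 hx3
  set a : ℕ → ℝ≥0∞ := fun n => ENNReal.ofReal
      (|(1 / (n : ℝ)) * ∑ k ∈ Finset.range n, (h (θ^[k] x) - h (θ^[k+1] x))| / δ n) with ha
  show Filter.limsup a atTop = ⊤
  have hγ1 : (0:ℝ) < γ 1 := hγpos 1
  have hnγ : ∀ n : ℕ, 1 ≤ n → γ 1 ≤ (n:ℝ) * γ n := by
    intro n hn
    have := hγmono (show (1:ℕ) ≤ n from hn)
    simpa using this
  -- the key claim
  have claim1 : ∀ m : ℕ, ∃ j, 1 ≤ j ∧ j ≤ N m ∧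
      ENNReal.ofReal (((m:ℝ)+1) - h x / γ 1) ≤ a j := by
    intro m
    obtain ⟨j, hj1, hjN, hjA⟩ := hx3 m
    refine ⟨j, hj1, hjN, ?_⟩
    set L : ℝ := ((m:ℝ)+1) - h x / γ 1 with hL
    rcases le_or_gt L 0 with hL0 | hL0
    · rw [ENNReal.ofReal_eq_zero.mpr hL0]; exact zero_le
    · -- real inequality
      apply ENNReal.ofReal_le_ofReal
      have hjR : (0:ℝ) < (j:ℝ) := by exact_mod_cast hj1
      have hδj : (0:ℝ) < δ j := hδpos j
      have hγj : γ 1 ≤ (j:ℝ) * γ j := hnγ j hj1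
      -- telescoping
      have htel : ∑ k ∈ Finset.range j, (h (θ^[k] x) - h (θ^[k+1] x))
          = h x - h (θ^[j] x) := by
        have := Finset.sum_range_sub' (fun k => h (θ^[k] x)) j
        simpa using this
      rw [htel]
      have hcm : c m ≤ h (θ^[j] x) := hkey m _ (hx2 j) hjA
      have hmono2 : (j:ℝ) * γ j ≤ (N m : ℝ) * γ (N m) := hγmono hjN
      have hcmj : ((m:ℝ)+1) * ((j:ℝ) * γ j) ≤ c m := by
        rw [hc]
        apply mul_le_mul_of_nonneg_left hmono2 (by positivity)
      -- numerator bound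
      have hnum : ((m:ℝ)+1) * ((j:ℝ) * γ j) - h x ≤ |1 / (j:ℝ) * (h x - h (θ^[j] x))| * (j:ℝ) := by
        have habs : h (θ^[j] x) - h x ≤ |h x - h (θ^[j] x)| := by
          rw [abs_sub_comm]; exact le_abs_self _
        have : |1 / (j:ℝ) * (h x - h (θ^[j] x))| * (j:ℝ) = |h x - h (θ^[j] x)| := by
          rw [abs_mul, abs_of_pos (by positivity : (0:ℝ) < 1/(j:ℝ))]
          field_simp
        rw [this]
        nlinarith [hcm, hcmj]
      -- conclude
      have hLpos : h x / γ 1 < (m:ℝ)+1 := by rw [hL] at hL0; linarith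
      have hhx : h x / ((j:ℝ) * γ j) ≤ h x / γ 1 :=
        div_le_div_of_nonneg_left (hnonneg x) hγ1 hγj
      set V : ℝ := |1 / (j:ℝ) * (h x - h (θ^[j] x))| with hV
      have hjγ : (0:ℝ) < (j:ℝ) * γ j := lt_of_lt_of_le hγ1 hγj
      have hxeq : h x / ((j:ℝ) * γ j) * ((j:ℝ) * γ j) = h x :=
        div_mul_cancel₀ _ hjγ.ne'
      have h1 : L * ((j:ℝ) * γ j) ≤ V * (j:ℝ) := by
        have hge : h x ≤ (h x / γ 1) * ((j:ℝ) * γ j) := by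
          calc h x = h x / ((j:ℝ) * γ j) * ((j:ℝ) * γ j) := hxeq.symm
          _ ≤ (h x / γ 1) * ((j:ℝ) * γ j) :=
            mul_le_mul_of_nonneg_right hhx hjγ.le
        have : L * ((j:ℝ) * γ j) ≤ ((m:ℝ)+1) * ((j:ℝ) * γ j) - h x := by
          rw [hL]; nlinarith
        exact this.trans hnum
      have h2 : L * γ j ≤ V := by
        apply le_of_mul_le_mul_right _ hjR
        calc L * γ j * (j:ℝ) = L * ((j:ℝ) * γ j) := by ring
        _ ≤ V * (j:ℝ) := h1
      rw [le_div_iff₀ hδj]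
      calc L * δ j ≤ L * γ j := mul_le_mul_of_nonneg_left (hδγ j) hL0.le
      _ ≤ V := h2
  -- conclude limsup = ⊤
  have hane : ∀ n, a n ≠ ⊤ := fun n => ENNReal.ofReal_ne_top
  have key : ∀ M : ℝ, ∀ n₀ : ℕ, ∃ n, n₀ ≤ n ∧ ENNReal.ofReal M ≤ a n := by
    intro M n₀
    set S₀ : ℝ≥0∞ := ∑ n ∈ Finset.range n₀, a n with hS₀
    have hS₀ne : S₀ ≠ ⊤ := by
      rw [hS₀]
      exact (ENNReal.sum_lt_top.mpr fun n _ => (hane n).lt_top).ne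
    obtain ⟨m, hm⟩ := exists_nat_ge (h x / γ 1 + max M (S₀.toReal))
    have hLm : max M (S₀.toReal) + 1 ≤ ((m:ℝ)+1) - h x / γ 1 := by linarith
    obtain ⟨j, hj1, hjN, hja⟩ := claim1 m
    have hjM : ENNReal.ofReal M ≤ a j := by
      refine le_trans (ENNReal.ofReal_le_ofReal ?_) hja
      have := le_max_left M (S₀.toReal); linarith
    have hjS : S₀ < a j := by
      refine lt_of_lt_of_le ?_ hja
      rw [ENNReal.lt_ofReal_iff_toReal_lt hS₀ne]
      have := le_max_right M (S₀.toReal); linarith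
    have hjn₀ : n₀ ≤ j := by
      by_contra hcon
      push_neg at hcon
      have : a j ≤ S₀ :=
        Finset.single_le_sum (f := a) (fun i _ => zero_le) (Finset.mem_range.mpr hcon)
      exact absurd (lt_of_lt_of_le hjS this) (lt_irrefl _)
    exact ⟨j, hjn₀, hjM⟩
  have hlim : ∀ M : ℝ, ENNReal.ofReal M ≤ Filter.limsup a atTop := by
    intro M
    refine Filter.le_limsup_of_frequently_le ?_ (by isBoundedDefault)
    rw [Filter.frequently_atTop]
    intro n₀
    obtain ⟨n, hn, h'⟩ := key M n₀
    exact ⟨n, hn, h'⟩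
  by_contra hcon
  have := hlim ((Filter.limsup a atTop).toReal + 1)
  have h2 : Filter.limsup a atTop < ENNReal.ofReal ((Filter.limsup a atTop).toReal + 1) := by
    rw [ENNReal.lt_ofReal_iff_toReal_lt hcon]
    exact lt_add_one _
  exact absurd (lt_of_lt_of_le h2 this) (lt_irrefl _)
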